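/- Let g be a monic real-rooted polynomial of degree n ≥ 1 (g has n real roots counted with multiplicity), let θ > 0, and set c := D_{−θ} g. Then for every 0 ≤ j ≤ n, the j-th derivative c^{(j)} has exactly n−j distinct real roots. -/

import Mathlib

open Polynomial Finset

/-- The linear operator `D_θ` on real polynomials:
`D_θ f = Σ_{k≥0} (θ/2)^k f^{(2k)} / k!` (a finite sum). -/
noncomputable def Dop (θ : ℝ) (f : Polynomial ℝ) : Polynomial ℝ :=
  ∑ k ∈ Finset.range (f.natDegree + 1),
    Polynomial.C ((θ/2)^k / (k.factorial : ℝ)) * (Polynomial.derivative^[2*k] f)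

noncomputable def Eop (θ : ℝ) (N : ℕ) (f : Polynomial ℝ) : Polynomial ℝ :=
  ∑ k ∈ Finset.range N,
    Polynomial.C ((θ/2)^k / (k.factorial : ℝ)) * (Polynomial.derivative^[2*k] f)

lemma Dop_eq_Eop (θ : ℝ) (f : Polynomial ℝ) : Dop θ f = Eop θ (f.natDegree + 1) f := rfl

lemma Eop_stable (θ : ℝ) {M N : ℕ} (f : Polynomial ℝ) (h1 : f.natDegree < M) (h2 : M ≤ N) :
    Eop θ N f = Eop θ M f := by
  unfold Eop
  symm
  apply Finset.sum_subset (Finset.range_subset_range.2 h2)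
  intro k _ hk
  rw [Finset.mem_range, not_lt] at hk
  rw [Polynomial.iterate_derivative_eq_zero (lt_of_lt_of_le h1 (le_trans hk (Nat.le_mul_of_pos_left k (by norm_num)))), mul_zero]

lemma Eop_eq_Dop (θ : ℝ) {N : ℕ} (f : Polynomial ℝ) (h : f.natDegree < N) :
    Eop θ N f = Dop θ f := by
  rw [Dop_eq_Eop, Eop_stable θ f (Nat.lt_succ_self _) h]

lemma derivative_Eop (θ : ℝ) (N : ℕ) (f : Polynomial ℝ) :
    Polynomial.derivative (Eop θ N f) = Eop θ N (Polynomial.derivative f) := by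
  unfold Eop
  rw [map_sum]
  refine Finset.sum_congr rfl fun k _ => ?_
  rw [Polynomial.derivative_C_mul]
  congr 1
  rw [← Function.iterate_succ_apply' Polynomial.derivative, ← Function.iterate_succ_apply Polynomial.derivative]

lemma derivative_Dop (θ : ℝ) (f : Polynomial ℝ) :
    Polynomial.derivative (Dop θ f) = Dop θ (Polynomial.derivative f) := by
  rw [Dop_eq_Eop, derivative_Eop,
    Eop_eq_Dop θ _ (lt_of_le_of_lt (Polynomial.natDegree_derivative_le f) (by omega))]

lemma iterate_derivative_Dop (θ : ℝ) (f : Polynomial ℝ) (j : ℕ) :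
    Polynomial.derivative^[j] (Dop θ f) = Dop θ (Polynomial.derivative^[j] f) := by
  induction j with
  | zero => rfl
  | succ j ih => rw [Function.iterate_succ_apply', ih, derivative_Dop,
      ← Function.iterate_succ_apply' Polynomial.derivative]

lemma Eop_C_mul (θ : ℝ) (N : ℕ) (c : ℝ) (f : Polynomial ℝ) :
    Eop θ N (Polynomial.C c * f) = Polynomial.C c * Eop θ N f := by
  unfold Eop
  rw [Finset.mul_sum]
  refine Finset.sum_congr rfl fun k _ => ?_
  rw [Polynomial.iterate_derivative_C_mul]
  ring

lemma iterate_derivative_X_mul' (f : Polynomial ℝ) (m : ℕ) :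
    Polynomial.derivative^[m + 1] (Polynomial.X * f)
      = Polynomial.X * Polynomial.derivative^[m + 1] f
        + (m + 1 : ℕ) • Polynomial.derivative^[m] f := by
  induction m with
  | zero => simp [Polynomial.derivative_mul]; ring
  | succ m ih =>
      rw [Function.iterate_succ_apply' Polynomial.derivative _ (Polynomial.X * f), ih]
      rw [map_add, Polynomial.derivative_mul, Polynomial.derivative_X, one_mul,
        Polynomial.derivative_smul, ← Function.iterate_succ_apply' Polynomial.derivative,
        ← Function.iterate_succ_apply' Polynomial.derivative]
      rw [succ_nsmul (Polynomial.derivative^[m+1] f) (m+1)]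
      ring

lemma Eop_X_mul (θ : ℝ) (N : ℕ) (f : Polynomial ℝ) :
    Eop θ (N + 1) (Polynomial.X * f)
      = Polynomial.X * Eop θ (N + 1) f
        + Polynomial.C θ * Polynomial.derivative (Eop θ N f) := by
  rw [derivative_Eop]
  unfold Eop
  rw [Finset.sum_range_succ' (fun k => Polynomial.C ((θ/2)^k / (k.factorial : ℝ)) *
      (Polynomial.derivative^[2*k] (Polynomial.X * f))),
    Finset.sum_range_succ' (fun k => Polynomial.C ((θ/2)^k / (k.factorial : ℝ)) *
      (Polynomial.derivative^[2*k] f))]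
  have hterm : ∀ j : ℕ,
      Polynomial.C ((θ/2)^(j+1) / ((j+1).factorial : ℝ)) *
        (Polynomial.derivative^[2*(j+1)] (Polynomial.X * f))
      = Polynomial.X * (Polynomial.C ((θ/2)^(j+1) / ((j+1).factorial : ℝ)) *
          Polynomial.derivative^[2*(j+1)] f)
        + Polynomial.C θ * (Polynomial.C ((θ/2)^j / (j.factorial : ℝ)) *
          Polynomial.derivative^[2*j] (Polynomial.derivative f)) := by
    intro j
    have h2 : 2*(j+1) = (2*j+1) + 1 := by ring
    rw [h2, iterate_derivative_X_mul' f (2*j+1)]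
    have h3 : Polynomial.derivative^[2*j+1] f
        = Polynomial.derivative^[2*j] (Polynomial.derivative f) :=
      Function.iterate_succ_apply Polynomial.derivative (2*j) f
    rw [nsmul_eq_mul, mul_add, h3]
    have hc : ((θ/2)^(j+1) / (((j+1).factorial : ℕ) : ℝ)) * ((2*j+1) + 1 : ℕ)
        = θ * ((θ/2)^j / ((j.factorial : ℕ) : ℝ)) := by
      push_cast
      rw [Nat.factorial_succ]
      push_cast
      have hj : ((j.factorial : ℕ) : ℝ) ≠ 0 := Nat.cast_ne_zero.2 j.factorial_ne_zero
      field_simp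
      ring
    calc Polynomial.C ((θ/2)^(j+1) / ((j+1).factorial : ℝ)) *
          (Polynomial.X * Polynomial.derivative^[2*j+1+1] f)
          + Polynomial.C ((θ/2)^(j+1) / ((j+1).factorial : ℝ)) *
            ((((2*j+1) + 1 : ℕ) : Polynomial ℝ) * Polynomial.derivative^[2*j] (Polynomial.derivative f))
        = Polynomial.X * (Polynomial.C ((θ/2)^(j+1) / ((j+1).factorial : ℝ)) *
            Polynomial.derivative^[2*j+1+1] f)
          + (Polynomial.C ((θ/2)^(j+1) / ((j+1).factorial : ℝ)) * (((2*j+1) + 1 : ℕ) : Polynomial ℝ)) *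
            Polynomial.derivative^[2*j] (Polynomial.derivative f) := by ring
      _ = _ := by
          rw [← Polynomial.C_eq_natCast, ← Polynomial.C_mul, hc, Polynomial.C_mul]
          ring
  rw [Finset.sum_congr rfl (fun j _ => hterm j)]
  rw [Finset.sum_add_distrib, mul_add, Finset.mul_sum]
  simp only [Nat.mul_zero, Function.iterate_zero_apply, pow_zero, Nat.factorial_zero,
    Polynomial.C_1, Nat.cast_one, div_one, one_mul]
  rw [Finset.mul_sum]
  ring

lemma Eop_sub (θ : ℝ) (N : ℕ) (f g : Polynomial ℝ) :
    Eop θ N (f - g) = Eop θ N f - Eop θ N g := by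
  unfold Eop
  rw [← Finset.sum_sub_distrib]
  refine Finset.sum_congr rfl fun k _ => ?_
  rw [Polynomial.iterate_derivative_sub, mul_sub]

lemma Dop_zero (θ : ℝ) : Dop θ 0 = 0 := by
  unfold Dop
  simp

lemma Dop_one (θ : ℝ) : Dop θ 1 = 1 := by
  unfold Dop
  simp

lemma Dop_C_mul (θ : ℝ) (c : ℝ) (f : Polynomial ℝ) :
    Dop θ (Polynomial.C c * f) = Polynomial.C c * Dop θ f := by
  rcases eq_or_ne c 0 with rfl | hc
  · simp [Dop_zero]
  · rw [Dop_eq_Eop, Polynomial.natDegree_C_mul hc, Eop_C_mul, ← Dop_eq_Eop]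

lemma Dop_X_sub_C_mul (θ a : ℝ) (f : Polynomial ℝ) :
    Dop θ ((Polynomial.X - Polynomial.C a) * f)
      = (Polynomial.X - Polynomial.C a) * Dop θ f
        + Polynomial.C θ * Polynomial.derivative (Dop θ f) := by
  rcases eq_or_ne f 0 with rfl | hf
  · simp [Dop_zero]
  · have hXa : (Polynomial.X - Polynomial.C a : Polynomial ℝ) ≠ 0 := Polynomial.X_sub_C_ne_zero a
    have hdeg : ((Polynomial.X - Polynomial.C a) * f).natDegree = f.natDegree + 1 := by
      rw [Polynomial.natDegree_mul hXa hf, Polynomial.natDegree_X_sub_C]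
      omega
    have h1 : Dop θ ((Polynomial.X - Polynomial.C a) * f)
        = Eop θ (f.natDegree + 1 + 1) ((Polynomial.X - Polynomial.C a) * f) := by
      rw [Eop_eq_Dop]
      omega
    rw [h1, sub_mul, Eop_sub, Eop_X_mul, Eop_C_mul,
      Eop_stable θ f (Nat.lt_succ_self _) (by omega), ← Dop_eq_Eop]
    ring

lemma exists_root_between {q : Polynomial ℝ} {x₁ x₂ : ℝ} (h : x₁ < x₂)
    (hs : q.eval x₁ * q.eval x₂ < 0) : ∃ x, x₁ < x ∧ x < x₂ ∧ q.eval x = 0 := by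
  have hc : ContinuousOn (fun x => q.eval x) (Set.Icc x₁ x₂) :=
    (Polynomial.continuous q).continuousOn
  rcases mul_neg_iff.mp hs with ⟨h1, h2⟩ | ⟨h1, h2⟩
  · have : (0:ℝ) ∈ Set.Ioo (q.eval x₂) (q.eval x₁) := ⟨h2, h1⟩
    obtain ⟨x, hx, hx0⟩ := intermediate_value_Ioo' h.le hc this
    exact ⟨x, hx.1, hx.2, hx0⟩
  · have : (0:ℝ) ∈ Set.Ioo (q.eval x₁) (q.eval x₂) := ⟨h1, h2⟩
    obtain ⟨x, hx, hx0⟩ := intermediate_value_Ioo h.le hc this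
    exact ⟨x, hx.1, hx.2, hx0⟩

lemma prod_erase_sign {m : ℕ} (r : Fin m → ℝ) (hr : StrictMono r) (i : Fin m) :
    0 < (-1:ℝ)^(m - 1 - (i:ℕ)) * ∏ j ∈ Finset.univ.erase i, (r i - r j) := by
  classical
  have hsplit : Finset.univ.erase i = Finset.Iio i ∪ Finset.Ioi i := by
    ext j
    simp only [Finset.mem_erase, Finset.mem_univ, and_true, Finset.mem_union,
      Finset.mem_Iio, Finset.mem_Ioi]
    exact ⟨fun hne => hne.lt_or_gt, fun hlt => hlt.elim (fun h => h.ne) (fun h => h.ne')⟩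
  have hdisj : Disjoint (Finset.Iio i) (Finset.Ioi i) :=
    (Finset.disjoint_Ioi_Iio i).symm
  rw [hsplit, Finset.prod_union hdisj]
  have h1 : 0 < ∏ j ∈ Finset.Iio i, (r i - r j) :=
    Finset.prod_pos fun j hj => sub_pos.2 (hr (Finset.mem_Iio.mp hj))
  have h2 : ∏ j ∈ Finset.Ioi i, (r i - r j)
      = (-1:ℝ)^(m - 1 - (i:ℕ)) * ∏ j ∈ Finset.Ioi i, (r j - r i) := by
    have : ∀ j ∈ Finset.Ioi i, r i - r j = (-1) * (r j - r i) := fun j _ => by ring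
    rw [Finset.prod_congr rfl this, Finset.prod_mul_distrib, Finset.prod_const,
      Fin.card_Ioi]
  have h3 : 0 < ∏ j ∈ Finset.Ioi i, (r j - r i) :=
    Finset.prod_pos fun j hj => sub_pos.2 (hr (Finset.mem_Ioi.mp hj))
  rw [h2]
  have h4 : ((-1:ℝ)^(m - 1 - (i:ℕ))) * ((-1:ℝ)^(m - 1 - (i:ℕ))) = 1 := by
    rw [← pow_add]
    exact Even.neg_one_pow ⟨m - 1 - (i:ℕ), rfl⟩
  nlinarith [mul_pos h1 h3]

lemma eval_derivative_prod' {m : ℕ} (r : Fin m → ℝ) (hr : Function.Injective r) (i : Fin m) :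
    (Polynomial.derivative (∏ j, (X - C (r j)))).eval (r i)
      = ∏ j ∈ Finset.univ.erase i, (r i - r j) := by
  classical
  have h1 : (∏ j, (X - C (r j))) = (Multiset.map (fun j => X - C (r j)) Finset.univ.val).prod :=
    rfl
  rw [h1, Polynomial.derivative_prod]
  have h2 : (Multiset.map
      (fun j => (Multiset.map (fun k => X - C (r k)) (Finset.univ.val.erase j)).prod *
        Polynomial.derivative (X - C (r j))) Finset.univ.val).sum
      = ∑ j : Fin m, (∏ k ∈ Finset.univ.erase j, (X - C (r k))) := by
    rw [Finset.sum]
    congr 1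
    apply Multiset.map_congr rfl
    intro j _
    rw [Polynomial.derivative_sub, Polynomial.derivative_X, Polynomial.derivative_C, sub_zero,
      mul_one]
    rfl
  rw [h2, Polynomial.eval_finset_sum]
  rw [Finset.sum_eq_single i]
  · rw [Polynomial.eval_prod]
    apply Finset.prod_congr rfl
    intro j _
    simp
  · intro b _ hbi
    rw [Polynomial.eval_prod]
    apply Finset.prod_eq_zero (Finset.mem_erase.mpr ⟨hbi.symm, Finset.mem_univ i⟩)
    simp
  · intro h; exact absurd (Finset.mem_univ i) h

lemma step_lemma (θ : ℝ) (hθ : 0 < θ) (a : ℝ) {m : ℕ} (r : Fin m → ℝ) (hr : StrictMono r) :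
    ∃ s : Fin (m+1) → ℝ, StrictMono s ∧
      (X - C a) * (∏ i, (X - C (r i))) - C θ * Polynomial.derivative (∏ i, (X - C (r i)))
        = ∏ i : Fin (m+1), (X - C (s i)) := by
  classical
  set p : Polynomial ℝ := ∏ i, (X - C (r i)) with hp
  have hpm : p.Monic := monic_prod_of_monic _ _ fun i _ => monic_X_sub_C _
  have hpd : p.natDegree = m := by
    rw [hp, Polynomial.natDegree_prod _ _ fun i _ => Polynomial.X_sub_C_ne_zero _]
    simp [Polynomial.natDegree_X_sub_C]
  set q : Polynomial ℝ := (X - C a) * p - C θ * Polynomial.derivative p with hq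
  have hXam : ((X - C a) * p).Monic := (monic_X_sub_C a).mul hpm
  have hXad : ((X - C a) * p).natDegree = m + 1 := by
    rw [Polynomial.natDegree_mul (Polynomial.X_sub_C_ne_zero a) hpm.ne_zero,
      Polynomial.natDegree_X_sub_C, hpd]
    omega
  have hdlt : (C θ * Polynomial.derivative p).degree < ((X - C a) * p).degree := by
    have h1 : ((X - C a) * p).degree = ((m + 1 : ℕ) : WithBot ℕ) := by
      rw [Polynomial.degree_eq_natDegree hXam.ne_zero, hXad]
    rw [h1]
    calc (C θ * Polynomial.derivative p).degree
        ≤ (Polynomial.derivative p).degree := by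
          rcases eq_or_ne (Polynomial.derivative p) 0 with h | h
          · simp [h]
          · rw [Polynomial.degree_mul, Polynomial.degree_C hθ.ne']
            simp
      _ ≤ p.degree := Polynomial.degree_derivative_le
      _ = ((m : ℕ) : WithBot ℕ) := by rw [Polynomial.degree_eq_natDegree hpm.ne_zero, hpd]
      _ < ((m + 1 : ℕ) : WithBot ℕ) := by exact_mod_cast WithBot.coe_lt_coe.2 (Nat.lt_succ_self m)
  have hqm : q.Monic := hXam.sub_of_left hdlt
  have hqd : q.natDegree = m + 1 := by
    have := Polynomial.degree_sub_eq_left_of_degree_lt hdlt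
    rw [hq]
    have h2 : q.degree = ((m + 1 : ℕ) : WithBot ℕ) := by
      rw [hq, this, Polynomial.degree_eq_natDegree hXam.ne_zero, hXad]
    exact Polynomial.natDegree_eq_of_degree_eq_some h2
  -- key existence of roots with localization
  have key : ∀ i : Fin (m+1), ∃ x, q.eval x = 0 ∧
      (∀ j : Fin m, (j:ℕ) + 1 ≤ (i:ℕ) → r j < x) ∧
      (∀ j : Fin m, (i:ℕ) ≤ (j:ℕ) → x < r j) := by
    rcases Nat.eq_zero_or_pos m with hm0 | hm
    · subst hm0
      intro i
      have hi : (i:ℕ) = 0 := by omega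
      have hqx : q = X - C a := by
        rw [hq, hp]
        simp
      exact ⟨a, by simp [hqx], fun j _ => j.elim0, fun j _ => j.elim0⟩
    -- m ≥ 1
    have hqe : ∀ i : Fin m, q.eval (r i) = -θ * ∏ j ∈ Finset.univ.erase i, (r i - r j) := by
      intro i
      have hp0 : p.eval (r i) = 0 := by
        rw [hp, Polynomial.eval_prod]
        exact Finset.prod_eq_zero (Finset.mem_univ i) (by simp)
      rw [hq, Polynomial.eval_sub, Polynomial.eval_mul, hp0, mul_zero, Polynomial.eval_mul,
        Polynomial.eval_C, eval_derivative_prod' r hr.injective i]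
      ring
    have hsign : ∀ i : Fin m, 0 < (-1:ℝ)^(m - (i:ℕ)) * q.eval (r i) := by
      intro i
      have h1 := prod_erase_sign r hr i
      rw [hqe i]
      have h2 : m - (i:ℕ) = (m - 1 - (i:ℕ)) + 1 := by omega
      rw [h2, pow_succ]
      nlinarith
    -- middle roots
    have hmid : ∀ i j : Fin m, (j:ℕ) = (i:ℕ) + 1 →
        ∃ x, r i < x ∧ x < r j ∧ q.eval x = 0 := by
      intro i j hij
      have hlt : i < j := by rw [Fin.lt_def]; omega
      have h1 := hsign i
      have h2 := hsign j
      have h3 : ((-1:ℝ)^(m - (i:ℕ))) * ((-1:ℝ)^(m - (j:ℕ))) = -1 := by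
        rw [← pow_add]
        have : (m - (i:ℕ)) + (m - (j:ℕ)) = 2 * (m - (j:ℕ)) + 1 := by omega
        rw [this]
        exact Odd.neg_one_pow ⟨m - (j:ℕ), by ring⟩
      have hprod : q.eval (r i) * q.eval (r j) < 0 := by nlinarith
      obtain ⟨x, hx1, hx2, hx0⟩ := exists_root_between (hr hlt) hprod
      exact ⟨x, hx1, hx2, hx0⟩
    -- rightmost root
    have hlast : ∃ x, r ⟨m-1, by omega⟩ < x ∧ q.eval x = 0 := by
      set i : Fin m := ⟨m-1, by omega⟩ with hidef
      have h1 := hsign i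
      have hiv : (i : ℕ) = m - 1 := rfl
      have h2 : m - (i:ℕ) = 1 := by omega
      rw [h2, pow_one] at h1
      have hneg : q.eval (r i) < 0 := by nlinarith
      have hdeg : 0 < q.degree := by
        rw [Polynomial.degree_eq_natDegree hqm.ne_zero, hqd]
        exact_mod_cast Nat.succ_pos m
      have htend := Polynomial.tendsto_atTop_of_leadingCoeff_nonneg q hdeg (by
        rw [hqm.leadingCoeff]; norm_num)
      obtain ⟨b, hb1, hb2⟩ := ((htend.eventually_ge_atTop 1).and
        (Filter.eventually_gt_atTop (r i))).exists
      have hprod : q.eval (r i) * q.eval b < 0 := by nlinarith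
      obtain ⟨x, hx1, _, hx0⟩ := exists_root_between hb2 hprod
      exact ⟨x, hx1, hx0⟩
    -- leftmost root
    have hfirst : ∃ x, x < r ⟨0, hm⟩ ∧ q.eval x = 0 := by
      set P : Polynomial ℝ := q.comp (-X) with hP
      have hPev : ∀ y, P.eval y = q.eval (-y) := by
        intro y; rw [hP, Polynomial.eval_comp]; simp
      have hPd : P.natDegree = m + 1 := by
        rw [hP, Polynomial.natDegree_comp]
        simp [hqd]
      have hPlc : P.leadingCoeff = (-1:ℝ)^(m+1) := by
        rw [hP, Polynomial.leadingCoeff_comp (by simp)]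
        simp [hqm.leadingCoeff, hqd]
      set Q : Polynomial ℝ := C ((-1:ℝ)^(m+1)) * P with hQ
      have hc0 : ((-1:ℝ)^(m+1)) ≠ 0 := by
        intro h; exact absurd (pow_eq_zero_iff (by omega) |>.mp h) (by norm_num)
      have hP0 : P ≠ 0 := fun h => by
        rw [h] at hPlc; simp at hPlc
        exact absurd hPlc.symm hc0
      have hQd : Q.natDegree = m + 1 := by
        rw [hQ, Polynomial.natDegree_C_mul hc0, hPd]
      have hQlc : Q.leadingCoeff = 1 := by
        rw [hQ, Polynomial.leadingCoeff_mul, Polynomial.leadingCoeff_C, hPlc, ← pow_add]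
        exact Even.neg_one_pow ⟨m+1, by ring⟩
      have hQdeg : 0 < Q.degree := by
        have hQ0 : Q ≠ 0 := fun h => by
          rw [h] at hQlc; simp at hQlc
        rw [Polynomial.degree_eq_natDegree hQ0, hQd]
        exact_mod_cast Nat.succ_pos m
      have htend := Polynomial.tendsto_atTop_of_leadingCoeff_nonneg Q hQdeg (by rw [hQlc]; norm_num)
      obtain ⟨y, hy1, hy2⟩ := ((htend.eventually_ge_atTop 1).and
        (Filter.eventually_gt_atTop (-(r ⟨0, hm⟩)))).exists
      have hyQ : Q.eval y = (-1:ℝ)^(m+1) * P.eval y := by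
        rw [hQ]; simp
      have hcq : q.eval (-y) = (-1:ℝ)^(m+1) * Q.eval y := by
        rw [hyQ, ← mul_assoc, ← pow_add]
        rw [show (m+1)+(m+1) = 2*(m+1) by ring]
        rw [Even.neg_one_pow ⟨m+1, by ring⟩, one_mul, hPev]
      have h0 := hsign ⟨0, hm⟩
      have hme : ((-1:ℝ)^(m+1)) = -((-1:ℝ)^(m - (0:ℕ))) := by
        simp only [Nat.sub_zero, pow_succ]
        ring
      have hprod : q.eval (-y) * q.eval (r ⟨0, hm⟩) < 0 := by
        rw [hcq, hme]
        simp only [Fin.val_mk, Nat.sub_zero] at h0 ⊢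
        nlinarith
      have hlt : -y < r ⟨0, hm⟩ := by linarith
      obtain ⟨x, _, hx2, hx0⟩ := exists_root_between hlt hprod
      exact ⟨x, hx2, hx0⟩
    -- assemble
    intro i
    rcases Nat.eq_zero_or_pos (i:ℕ) with h0 | hpos
    · obtain ⟨x, hx1, hx0⟩ := hfirst
      refine ⟨x, hx0, fun j hj => by omega, fun j _ => ?_⟩
      exact lt_of_lt_of_le hx1 (hr.monotone (by rw [Fin.le_def]; simp))
    rcases eq_or_lt_of_le (Nat.le_of_lt_succ i.isLt) with him | him
    · -- i.val = m : rightmost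
      obtain ⟨x, hx1, hx0⟩ := hlast
      refine ⟨x, hx0, fun j hj => ?_, fun j hj => by omega⟩
      exact lt_of_le_of_lt (hr.monotone (by rw [Fin.le_def]; simp; omega)) hx1
    · -- 0 < i.val < m : middle
      obtain ⟨x, hx1, hx2, hx0⟩ := hmid ⟨(i:ℕ) - 1, by omega⟩ ⟨(i:ℕ), him⟩ (by simp; omega)
      refine ⟨x, hx0, fun j hj => ?_, fun j hj => ?_⟩
      · exact lt_of_le_of_lt (hr.monotone (by rw [Fin.le_def]; simp; omega)) hx1
      · exact lt_of_lt_of_le hx2 (hr.monotone (by rw [Fin.le_def]; simp; omega))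
  choose s hs0 hs1 hs2 using key
  have hsm : StrictMono s := by
    rw [Fin.strictMono_iff_lt_succ]
    intro i
    have h1 : s i.castSucc < r i := hs2 i.castSucc i (by simp)
    have h2 : r i < s i.succ := hs1 i.succ i (by simp)
    exact h1.trans h2
  refine ⟨s, hsm, ?_⟩
  -- q = ∏ (X - C (s i))
  have hdvd : (∏ i : Fin (m+1), (X - C (s i))) ∣ q := by
    apply Finset.prod_dvd_of_coprime
    · exact ((Polynomial.pairwise_coprime_X_sub_C hsm.injective).set_pairwise _)
    · intro i _
      exact Polynomial.dvd_iff_isRoot.mpr (hs0 i)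
  obtain ⟨v, hv⟩ := hdvd
  have hprodm : (∏ i : Fin (m+1), (X - C (s i))).Monic :=
    monic_prod_of_monic _ _ fun i _ => monic_X_sub_C _
  have hprodd : (∏ i : Fin (m+1), (X - C (s i))).natDegree = m + 1 := by
    rw [Polynomial.natDegree_prod _ _ fun i _ => Polynomial.X_sub_C_ne_zero _]
    simp [Polynomial.natDegree_X_sub_C]
  have hv0 : v ≠ 0 := fun h => by
    rw [h, mul_zero] at hv; exact hqm.ne_zero hv
  have hvd : v.natDegree = 0 := by
    have := hqd
    rw [hv, Polynomial.natDegree_mul hprodm.ne_zero hv0, hprodd] at this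
    omega
  have hvm : v.leadingCoeff = 1 := by
    have h1 : q.leadingCoeff = (∏ i : Fin (m+1), (X - C (s i))).leadingCoeff * v.leadingCoeff := by
      rw [hv, Polynomial.leadingCoeff_mul]
    rw [hqm.leadingCoeff, hprodm.leadingCoeff, one_mul] at h1
    exact h1.symm
  have hv1 : v = 1 := by
    rw [Polynomial.eq_C_of_natDegree_eq_zero hvd]
    rw [Polynomial.eq_C_of_natDegree_eq_zero hvd] at hvm
    rw [Polynomial.leadingCoeff_C] at hvm
    rw [hvm]
    simp
  rw [hv1, mul_one] at hv
  exact hv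

lemma Dop_list_prod (θ : ℝ) (hθ : 0 < θ) (L : List ℝ) :
    ∃ s : Fin L.length → ℝ, StrictMono s ∧
      Dop (-θ) (L.map (fun x => X - C x)).prod = ∏ i, (X - C (s i)) := by
  induction L with
  | nil =>
      refine ⟨fun i => i.elim0, fun i => i.elim0, ?_⟩
      simp [Dop_one]
  | cons a L ih =>
      obtain ⟨s, hsm, hs⟩ := ih
      obtain ⟨t, htm, ht⟩ := step_lemma θ hθ a s hsm
      refine ⟨t, htm, ?_⟩
      rw [List.map_cons, List.prod_cons, Dop_X_sub_C_mul, hs]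
      simp only [List.length_cons]
      rw [← ht, map_neg]
      ring

lemma iter_facts (g : Polynomial ℝ) (hmonic : g.Monic)
    (hroots : g.roots.card = g.natDegree) :
    ∀ j, j ≤ g.natDegree → (Polynomial.derivative^[j] g) ≠ 0 ∧
      (Polynomial.derivative^[j] g).natDegree = g.natDegree - j ∧
      (Polynomial.derivative^[j] g).roots.card = g.natDegree - j := by
  intro j
  induction j with
  | zero => intro _; exact ⟨hmonic.ne_zero, by simp, by simpa using hroots⟩
  | succ j ih =>
      intro hj
      obtain ⟨h0, hd, hc⟩ := ih (by omega)
      set p := Polynomial.derivative^[j] g with hpdef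
      have hdp : 0 < p.natDegree := by omega
      have hdeg := Polynomial.degree_derivative_eq p hdp
      have h0' : Polynomial.derivative p ≠ 0 := by
        intro h
        rw [h, Polynomial.degree_zero] at hdeg
        exact absurd hdeg.symm (by simp)
      have hd' : (Polynomial.derivative p).natDegree = p.natDegree - 1 :=
        Polynomial.natDegree_eq_of_degree_eq_some hdeg
      have hle : (Polynomial.derivative p).roots.card ≤ (Polynomial.derivative p).natDegree :=
        Polynomial.card_roots' _
      have hge := Polynomial.card_roots_le_derivative p
      rw [Function.iterate_succ_apply', ← hpdef]
      exact ⟨h0', by omega, by omega⟩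

/-- If `g` is monic, real-rooted of degree `n ≥ 1` (it has `n` real roots counted with
multiplicity), `θ > 0` and `c = D_{−θ} g`, then for every `0 ≤ j ≤ n` the derivative
`c^{(j)}` has exactly `n − j` distinct real roots. -/
theorem stmt13 (g : Polynomial ℝ) (hmonic : g.Monic) (hn : 1 ≤ g.natDegree)
    (hroots : (g.roots).card = g.natDegree) (θ : ℝ) (hθ : 0 < θ) :
    ∀ j, j ≤ g.natDegree →
      {x : ℝ | (Polynomial.derivative^[j] (Dop (-θ) g)).eval x = 0}.ncard
        = g.natDegree - j := by
  intro j hj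
  obtain ⟨h0, hd, hc⟩ := iter_facts g hmonic hroots j hj
  set p := Polynomial.derivative^[j] g with hpdef
  have hsplit : p.Splits :=
    (Polynomial.splits_iff_card_roots).mpr (by rw [hc, hd])
  have hfact := hsplit.eq_prod_roots
  set L := p.roots.toList with hLdef
  have hLlen : L.length = g.natDegree - j := by
    rw [hLdef, Multiset.length_toList, hc]
  have hprodL : (Multiset.map (fun a => X - C a) p.roots).prod
      = (L.map (fun a => X - C a)).prod := by
    conv_lhs => rw [← Multiset.coe_toList p.roots]
    rw [Multiset.map_coe, Multiset.prod_coe]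
  obtain ⟨s, hsm, hs⟩ := Dop_list_prod θ hθ L
  have hlc : p.leadingCoeff ≠ 0 := Polynomial.leadingCoeff_ne_zero.mpr h0
  have key : Polynomial.derivative^[j] (Dop (-θ) g)
      = C p.leadingCoeff * ∏ i, (X - C (s i)) := by
    rw [iterate_derivative_Dop, ← hpdef]
    conv_lhs => rw [hfact]
    rw [hprodL, Dop_C_mul, hs]
  have hset : {x : ℝ | (Polynomial.derivative^[j] (Dop (-θ) g)).eval x = 0}
      = Set.range s := by
    ext x
    simp only [key, Set.mem_setOf_eq, Polynomial.eval_mul, Polynomial.eval_C,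
      Polynomial.eval_prod, Polynomial.eval_sub, Polynomial.eval_X, mul_eq_zero,
      Finset.prod_eq_zero_iff, Finset.mem_univ, true_and, sub_eq_zero, Set.mem_range]
    constructor
    · rintro (h | ⟨i, hi⟩)
      · exact absurd h hlc
      · exact ⟨i, hi.symm⟩
    · rintro ⟨i, rfl⟩
      exact Or.inr ⟨i, rfl⟩
  rw [hset, ← Set.image_univ, Set.ncard_image_of_injective _ hsm.injective,
    Set.ncard_univ, Nat.card_eq_fintype_card, Fintype.card_fin, hLlen]
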